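/- Let A be a real n×d matrix of full column rank with rows a_1,…,a_n, and let p ≥ 2. For each i ∈ [n], the function φ_i : ℝ^n_{>0} → ℝ defined by φ_i(v) = log( v_i^{−2/p} · a_i^⊤ (A^⊤ diag(v)^{1−2/p} A)^{−1} a_i ) is convex on the open positive orthant { v ∈ ℝ^n : v_j > 0 for all j }, provided a_i ≠ 0 (so that the argument of the logarithm is positive). -/

import Mathlib

open Matrix

private lemma combo_pos {t s x y : ℝ} (ht : 0 ≤ t) (hs : 0 ≤ s) (hts : t + s = 1)
    (hx : 0 < x) (hy : 0 < y) : 0 < t * x + s * y := by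
  rcases ht.eq_or_lt with h | h
  · rw [← h] at hts ⊢
    rw [zero_add] at hts
    simpa [hts] using hy
  · exact add_pos_of_pos_of_nonneg (mul_pos h hx) (mul_nonneg hs hy.le)

theorem stmt16 {n d : ℕ} (A : Matrix (Fin n) (Fin d) ℝ) (hA : A.rank = d)
    (p : ℝ) (hp : 2 ≤ p) (i : Fin n) (hai : A i ≠ 0) :
    ConvexOn ℝ {v : Fin n → ℝ | ∀ j, 0 < v j}
      (fun v : Fin n → ℝ => Real.log ((v i) ^ (-(2/p)) *
        (A i ⬝ᵥ ((Aᵀ * Matrix.diagonal (fun j => v j ^ (1 - 2/p)) * A)⁻¹ *ᵥ A i)))) := by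
  have hp0 : (0:ℝ) < p := lt_of_lt_of_le (by norm_num) hp
  have h2p : (0:ℝ) < 2/p := by positivity
  have hα0 : 0 ≤ 1 - 2/p := by
    have : 2/p ≤ 1 := (div_le_one hp0).2 hp
    linarith
  have hα1 : 1 - 2/p ≤ 1 := by linarith
  set α : ℝ := 1 - 2/p with hαdef
  set a : Fin d → ℝ := A i with hadef
  set M : (Fin n → ℝ) → Matrix (Fin d) (Fin d) ℝ :=
    fun v => Aᵀ * Matrix.diagonal (fun j => v j ^ α) * A with hMdef
  set F : (Fin n → ℝ) → ℝ := fun v => a ⬝ᵥ ((M v)⁻¹ *ᵥ a) with hFdef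
  -- injectivity of mulVec
  have hinj : Function.Injective A.mulVecLin := by
    rw [← LinearMap.ker_eq_bot]
    have h1 := LinearMap.finrank_range_add_finrank_ker A.mulVecLin
    rw [Module.finrank_fin_fun] at h1
    have h2 : Module.finrank ℝ (LinearMap.range A.mulVecLin) = d := hA
    rw [h2] at h1
    exact Submodule.finrank_eq_zero.mp (by omega)
  have hAx : ∀ x : Fin d → ℝ, x ≠ 0 → A *ᵥ x ≠ 0 := by
    intro x hx h0
    exact hx (hinj (show A.mulVecLin x = A.mulVecLin 0 by simpa using h0))
  -- bilinear form expansion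
  have hbil : ∀ (v : Fin n → ℝ) (x y : Fin d → ℝ),
      x ⬝ᵥ (M v *ᵥ y) = ∑ j, v j ^ α * ((A *ᵥ x) j * (A *ᵥ y) j) := by
    intro v x y
    have h1 : M v *ᵥ y = Aᵀ *ᵥ (Matrix.diagonal (fun j => v j ^ α) *ᵥ (A *ᵥ y)) := by
      rw [Matrix.mulVec_mulVec, Matrix.mulVec_mulVec]
    rw [h1, Matrix.dotProduct_mulVec, Matrix.vecMul_transpose]
    simp only [dotProduct, Matrix.mulVec_diagonal]
    exact Finset.sum_congr rfl (fun j _ => by ring)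
  -- positivity of the quadratic form sums
  have hposQ : ∀ v : Fin n → ℝ, (∀ j, 0 < v j) → ∀ x : Fin d → ℝ, x ≠ 0 →
      0 < ∑ j, v j ^ α * ((A *ᵥ x) j * (A *ᵥ x) j) := by
    intro v hv x hx
    obtain ⟨j0, hj0⟩ := Function.ne_iff.mp (hAx x hx)
    apply Finset.sum_pos'
    · intro j _
      have := (Real.rpow_pos_of_pos (hv j) α).le
      nlinarith [mul_self_nonneg ((A *ᵥ x) j)]
    · refine ⟨j0, Finset.mem_univ _, ?_⟩
      have h1 := Real.rpow_pos_of_pos (hv j0) α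
      have h2 : 0 < (A *ᵥ x) j0 * (A *ᵥ x) j0 := by
        rcases lt_or_gt_of_ne (show (A *ᵥ x) j0 ≠ (0:ℝ) by simpa using hj0) with h | h
        · nlinarith
        · nlinarith
      exact mul_pos h1 h2
  -- positive definiteness
  have hPD : ∀ v : Fin n → ℝ, (∀ j, 0 < v j) → (M v).PosDef := by
    intro v hv
    rw [Matrix.posDef_iff_dotProduct_mulVec]
    constructor
    · show (M v)ᴴ = M v
      have : (M v)ᴴ = (M v)ᵀ := by
        ext j k
        simp [Matrix.conjTranspose_apply]
      rw [this, hMdef]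
      simp [Matrix.transpose_mul, Matrix.diagonal_transpose, Matrix.mul_assoc]
    · intro x hx
      have : star x = x := by simp
      rw [this, hbil]
      exact hposQ v hv x hx
  have hdet : ∀ v : Fin n → ℝ, (∀ j, 0 < v j) → IsUnit (M v).det :=
    fun v hv => ((hPD v hv).det_pos).ne'.isUnit
  have hMa : ∀ v : Fin n → ℝ, (∀ j, 0 < v j) → M v *ᵥ ((M v)⁻¹ *ᵥ a) = a := by
    intro v hv
    rw [Matrix.mulVec_mulVec, Matrix.mul_nonsing_inv _ (hdet v hv), Matrix.one_mulVec]
  have hFsum : ∀ v : Fin n → ℝ, (∀ j, 0 < v j) →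
      F v = ∑ j, v j ^ α * ((A *ᵥ ((M v)⁻¹ *ᵥ a)) j * (A *ᵥ ((M v)⁻¹ *ᵥ a)) j) := by
    intro v hv
    have h1 : F v = ((M v)⁻¹ *ᵥ a) ⬝ᵥ (M v *ᵥ ((M v)⁻¹ *ᵥ a)) := by
      rw [hMa v hv]
      exact dotProduct_comm a _
    rw [h1, hbil]
  have hxne : ∀ v : Fin n → ℝ, (∀ j, 0 < v j) → ((M v)⁻¹ *ᵥ a) ≠ 0 := by
    intro v hv h0
    apply hai
    have h1 := hMa v hv
    rw [h0, Matrix.mulVec_zero] at h1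
    exact h1.symm
  have hFpos : ∀ v : Fin n → ℝ, (∀ j, 0 < v j) → 0 < F v := by
    intro v hv
    rw [hFsum v hv]
    exact hposQ v hv _ (hxne v hv)
  have hhalf : ∀ c : ℝ, 0 < c → c ^ (α/2) * c ^ (α/2) = c ^ α := by
    intro c hc
    rw [← Real.rpow_add hc]
    norm_num
  -- Cauchy–Schwarz
  have hCS : ∀ v : Fin n → ℝ, (∀ j, 0 < v j) → ∀ x : Fin d → ℝ,
      (a ⬝ᵥ x)^2 ≤ F v * ∑ j, v j ^ α * ((A *ᵥ x) j * (A *ᵥ x) j) := by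
    intro v hv x
    set y : Fin d → ℝ := (M v)⁻¹ *ᵥ a with hy
    have h1 : a ⬝ᵥ x = ∑ j, (v j ^ (α/2) * (A *ᵥ y) j) * (v j ^ (α/2) * (A *ᵥ x) j) := by
      conv_lhs => rw [← hMa v hv]
      rw [show (M v *ᵥ y) ⬝ᵥ x = x ⬝ᵥ (M v *ᵥ y) from dotProduct_comm _ _, hbil]
      refine Finset.sum_congr rfl (fun j _ => ?_)
      rw [show v j ^ (α/2) * (A *ᵥ y) j * (v j ^ (α/2) * (A *ᵥ x) j)
          = (v j ^ (α/2) * v j ^ (α/2)) * ((A *ᵥ y) j * (A *ᵥ x) j) from by ring,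
        hhalf (v j) (hv j)]
      ring
    have h2 := Finset.sum_mul_sq_le_sq_mul_sq Finset.univ
      (fun j => v j ^ (α/2) * (A *ᵥ y) j) (fun j => v j ^ (α/2) * (A *ᵥ x) j)
    rw [← h1] at h2
    have h3 : ∑ j, (v j ^ (α/2) * (A *ᵥ y) j)^2 = F v := by
      rw [hFsum v hv]
      refine Finset.sum_congr rfl (fun j _ => ?_)
      rw [show (v j ^ (α/2) * (A *ᵥ y) j)^2
          = (v j ^ (α/2) * v j ^ (α/2)) * ((A *ᵥ y) j * (A *ᵥ y) j) from by ring,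
        hhalf (v j) (hv j)]
    have h4 : ∑ j, (v j ^ (α/2) * (A *ᵥ x) j)^2 = ∑ j, v j ^ α * ((A *ᵥ x) j * (A *ᵥ x) j) := by
      refine Finset.sum_congr rfl (fun j _ => ?_)
      rw [show (v j ^ (α/2) * (A *ᵥ x) j)^2
          = (v j ^ (α/2) * v j ^ (α/2)) * ((A *ᵥ x) j * (A *ᵥ x) j) from by ring,
        hhalf (v j) (hv j)]
    rw [h3, h4] at h2
    exact h2
  -- log lemmas
  have hlog2 : ∀ X Y Z : ℝ, 0 < X → 0 < Y → 0 < Z → X^2 ≤ Y * Z →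
      2 * Real.log X ≤ Real.log Y + Real.log Z := by
    intro X Y Z hX hY hZ h
    have h1 := Real.log_le_log (by positivity) h
    rw [Real.log_pow, Real.log_mul hY.ne' hZ.ne'] at h1
    push_cast at h1
    linarith
  have hlogcc : ∀ x y : ℝ, 0 < x → 0 < y → ∀ t s : ℝ, 0 ≤ t → 0 ≤ s → t + s = 1 →
      t * Real.log x + s * Real.log y ≤ Real.log (t * x + s * y) := by
    intro x y hx hy t s ht hs hts
    have := strictConcaveOn_log_Ioi.concaveOn.2 (Set.mem_Ioi.2 hx) (Set.mem_Ioi.2 hy) ht hs hts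
    simpa using this
  have hrpow : ∀ x y : ℝ, 0 < x → 0 < y → ∀ t s : ℝ, 0 ≤ t → 0 ≤ s → t + s = 1 →
      t * x ^ α + s * y ^ α ≤ (t * x + s * y) ^ α := by
    intro x y hx hy t s ht hs hts
    have := (Real.concaveOn_rpow hα0 hα1).2 (Set.mem_Ici.2 hx.le) (Set.mem_Ici.2 hy.le) ht hs hts
    simpa using this
  -- the value of φ
  have hφ : ∀ z : Fin n → ℝ, (∀ j, 0 < z j) →
      Real.log ((z i) ^ (-(2/p)) * (a ⬝ᵥ ((M z)⁻¹ *ᵥ a)))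
        = -(2/p) * Real.log (z i) + Real.log (F z) := by
    intro z hz
    rw [Real.log_mul (Real.rpow_pos_of_pos (hz i) _).ne' (hFpos z hz).ne', Real.log_rpow (hz i)]
  constructor
  · intro v hv w hw t s ht hs hts j
    have := combo_pos ht hs hts (hv j) (hw j)
    simpa [smul_eq_mul] using this
  · intro v hv w hw t s ht hs hts
    have hvS : ∀ j, 0 < v j := hv
    have hwS : ∀ j, 0 < w j := hw
    set u : Fin n → ℝ := t • v + s • w with hu
    have huj : ∀ j, u j = t * v j + s * w j := by
      intro j; simp [hu, smul_eq_mul]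
    have huS : ∀ j, 0 < u j := fun j => by
      rw [huj j]; exact combo_pos ht hs hts (hv j) (hw j)
    show Real.log ((u i) ^ (-(2/p)) * (a ⬝ᵥ ((M u)⁻¹ *ᵥ a)))
      ≤ t • Real.log ((v i) ^ (-(2/p)) * (a ⬝ᵥ ((M v)⁻¹ *ᵥ a)))
        + s • Real.log ((w i) ^ (-(2/p)) * (a ⬝ᵥ ((M w)⁻¹ *ᵥ a)))
    rw [smul_eq_mul, smul_eq_mul, hφ u huS, hφ v hvS, hφ w hwS]
    set x : Fin d → ℝ := (M u)⁻¹ *ᵥ a with hx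
    have hFu : 0 < F u := hFpos u huS
    have hax : a ⬝ᵥ x = F u := rfl
    have hxne0 : x ≠ 0 := hxne u huS
    set Qv : ℝ := ∑ j, v j ^ α * ((A *ᵥ x) j * (A *ᵥ x) j) with hQv
    set Qw : ℝ := ∑ j, w j ^ α * ((A *ᵥ x) j * (A *ᵥ x) j) with hQw
    have hQvpos : 0 < Qv := hposQ v hvS x hxne0
    have hQwpos : 0 < Qw := hposQ w hwS x hxne0
    have hcsv : (F u)^2 ≤ F v * Qv := by rw [← hax]; exact hCS v hvS x
    have hcsw : (F u)^2 ≤ F w * Qw := by rw [← hax]; exact hCS w hwS x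
    have h2v := hlog2 _ _ _ hFu (hFpos v hvS) hQvpos hcsv
    have h2w := hlog2 _ _ _ hFu (hFpos w hwS) hQwpos hcsw
    have hsum_le : t * Qv + s * Qw ≤ F u := by
      rw [hFsum u huS, ← hx]
      rw [hQv, hQw]
      rw [Finset.mul_sum, Finset.mul_sum, ← Finset.sum_add_distrib]
      apply Finset.sum_le_sum
      intro j _
      have h5 : t * (v j ^ α * ((A *ᵥ x) j * (A *ᵥ x) j)) + s * (w j ^ α * ((A *ᵥ x) j * (A *ᵥ x) j))
          = (t * v j ^ α + s * w j ^ α) * ((A *ᵥ x) j * (A *ᵥ x) j) := by ring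
      rw [h5]
      apply mul_le_mul_of_nonneg_right _ (mul_self_nonneg _)
      rw [huj j]
      exact hrpow (v j) (w j) (hv j) (hw j) t s ht hs hts
    have hQcc : t * Real.log Qv + s * Real.log Qw ≤ Real.log (F u) :=
      le_trans (hlogcc Qv Qw hQvpos hQwpos t s ht hs hts)
        (Real.log_le_log (combo_pos ht hs hts hQvpos hQwpos) hsum_le)
    have hicc : t * Real.log (v i) + s * Real.log (w i) ≤ Real.log (u i) := by
      rw [huj i]
      exact hlogcc (v i) (w i) (hv i) (hw i) t s ht hs hts
    have e2 : (2/p) * (t * Real.log (v i) + s * Real.log (w i) - Real.log (u i)) ≤ 0 :=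
      mul_nonpos_of_nonneg_of_nonpos h2p.le (by linarith)
    have e3 := mul_le_mul_of_nonneg_left h2v ht
    have e4 := mul_le_mul_of_nonneg_left h2w hs
    have e5 : t * (2 * Real.log (F u)) + s * (2 * Real.log (F u)) = 2 * Real.log (F u) := by
      rw [← add_mul, hts, one_mul]
    nlinarith [e2, e3, e4, e5, hQcc]
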